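/- For all 1 ≤ j ≤ n and all k ≥ j, the polynomial h_k(x_j^m,...,x_n^m) lies in the ideal of ℂ[x_1,...,x_n] generated by the power sums p_i = ∑_{ℓ=1}^n x_ℓ^{mi} for i ≥ 1 (equivalently, the ideal generated by all symmetric polynomials in x_1^m,...,x_n^m of positive degree). -/

import Mathlib

open MvPolynomial Finset

namespace HsubkAux

variable {σ : Type*} [Fintype σ] [DecidableEq σ]

lemma rename_hsymm_subtype (p : σ → Prop) [DecidablePred p] (k : ℕ) :
    rename (Subtype.val : {x // p x} → σ) (hsymm {x // p x} ℂ k)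
      = ∑ t : Sym {x // p x} k, ((t.1.map Subtype.val).map X).prod := by
  rw [hsymm, map_sum]
  refine Finset.sum_congr rfl fun t _ => ?_
  rw [map_multiset_prod, Multiset.map_map, Multiset.map_map]
  exact congrArg _ (Multiset.map_congr rfl fun x _ => rename_X _ _)

lemma hsymm_succ (a : σ) (k : ℕ) :
    hsymm σ ℂ (k+1)
      = rename (Subtype.val : {x : σ // x ≠ a} → σ) (hsymm {x : σ // x ≠ a} ℂ (k+1))
        + X a * hsymm σ ℂ k := by
  rw [rename_hsymm_subtype]
  nth_rw 1 [hsymm]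
  rw [hsymm, Finset.mul_sum,
    ← Finset.sum_filter_add_sum_filter_not Finset.univ (fun s : Sym σ (k+1) => a ∈ s)]
  rw [add_comm]
  congr 1
  · -- a ∉ s part
    refine Finset.sum_bij' (fun s hs => (⟨s.1.attach.map (fun x : {y // y ∈ s.1} =>
        (⟨x.1, fun h => (Finset.mem_filter.mp hs).2 (h ▸ x.2)⟩ : {x : σ // x ≠ a})),
        by rw [Multiset.card_map, Multiset.card_attach, s.2]⟩ : Sym {x : σ // x ≠ a} (k+1)))
      (fun t _ => (⟨t.1.map Subtype.val, by rw [Multiset.card_map, t.2]⟩ : Sym σ (k+1))) ?_ ?_ ?_ ?_ ?_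
    · intros; exact Finset.mem_univ _
    · intro t _
      apply Finset.mem_filter.mpr
      refine ⟨Finset.mem_univ _, ?_⟩
      intro h
      have h' : a ∈ Multiset.map Subtype.val t.1 := h
      simp only [Multiset.mem_map] at h'
      obtain ⟨x, _, hx⟩ := h'
      exact x.2 hx
    · intro s hs
      apply Sym.coe_injective
      show Multiset.map Subtype.val (Multiset.map _ s.1.attach) = s.1
      rw [Multiset.map_map]
      exact Multiset.attach_map_val _
    · intro t ht
      apply Sym.coe_injective
      apply Multiset.map_injective (Subtype.val_injective)
      show Multiset.map Subtype.val (Multiset.map _ (Multiset.map Subtype.val t.1).attach)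
        = Multiset.map Subtype.val t.1
      rw [Multiset.map_map]
      exact Multiset.attach_map_val _
    · intro s hs
      show (Multiset.map X s.1).prod = (((s.1.attach.map _).map Subtype.val).map X).prod
      rw [Multiset.map_map, Multiset.map_map]
      conv_lhs => rw [← Multiset.attach_map_val s.1, Multiset.map_map]
      rfl
  · -- a ∈ s part
    refine Finset.sum_bij' (fun s hs => s.erase a (Finset.mem_filter.mp hs).2)
      (fun t _ => a ::ₛ t) ?_ ?_ ?_ ?_ ?_
    · intros; exact Finset.mem_univ _
    · intro t _
      exact Finset.mem_filter.mpr ⟨Finset.mem_univ _, Sym.mem_cons_self a t⟩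
    · intro s hs
      exact Sym.cons_erase _
    · intro t ht
      exact Sym.erase_cons_head t a
    · intro s hs
      have h := (Finset.mem_filter.mp hs).2
      conv_lhs => rw [← Sym.cons_erase h]
      simp [Sym.cons, Multiset.map_cons, Multiset.prod_cons]


lemma constantCoeff_hsymm (k : ℕ) (hk : 1 ≤ k) :
    constantCoeff (hsymm σ ℂ k) = 0 := by
  rw [hsymm, map_sum]
  refine Finset.sum_eq_zero fun s _ => ?_
  rw [map_multiset_prod, Multiset.map_map]
  have : (Multiset.map (⇑constantCoeff ∘ X) s.1) = Multiset.map (fun _ => (0:ℂ)) s.1 := by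
    refine Multiset.map_congr rfl fun x _ => ?_
    simp
  rw [this, Multiset.map_const', Multiset.prod_replicate, s.2]
  exact zero_pow (by omega)

lemma symmetric_mem_span (p : MvPolynomial σ ℂ) (hp : p.IsSymmetric)
    (h0 : constantCoeff p = 0) :
    p ∈ Ideal.span (Set.range fun i : ℕ => psum σ ℂ (i+1)) := by
  set I := Ideal.span (Set.range fun i : ℕ => psum σ ℂ (i+1)) with hI
  have hpsum : ∀ k, 1 ≤ k → psum σ ℂ k ∈ I := fun k hk =>
    Ideal.subset_span ⟨k-1, by simp only []; rw [Nat.sub_add_cancel hk]⟩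
  have hesymm : ∀ k, 1 ≤ k → esymm σ ℂ k ∈ I := by
    intro k hk
    have hmem : ((k : MvPolynomial σ ℂ) * esymm σ ℂ k) ∈ I := by
      rw [mul_esymm_eq_sum]
      refine Ideal.mul_mem_left _ _ (Ideal.sum_mem _ fun a ha => ?_)
      simp only [Finset.mem_filter, Finset.HasAntidiagonal.mem_antidiagonal] at ha
      exact Ideal.mul_mem_left _ _ (hpsum a.2 (by omega))
    have hkne : (k : ℂ) ≠ 0 := Nat.cast_ne_zero.mpr (by omega)
    have : esymm σ ℂ k = C ((k:ℂ)⁻¹) * ((k : MvPolynomial σ ℂ) * esymm σ ℂ k) := by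
      rw [← mul_assoc, show ((k : ℕ) : MvPolynomial σ ℂ) = C ((k:ℕ) : ℂ) by
        rw [map_natCast], ← map_mul, inv_mul_cancel₀ hkne, map_one, one_mul]
    rw [this]
    exact Ideal.mul_mem_left _ _ hmem
  have key : ∀ q : MvPolynomial (Fin (Fintype.card σ)) ℂ, ∃ c : ℂ,
      aeval (fun i : Fin (Fintype.card σ) => esymm σ ℂ (i + 1)) q - C c ∈ I := by
    intro q
    induction q using MvPolynomial.induction_on with
    | C r => exact ⟨r, by simp⟩
    | add p q hp hq =>
      obtain ⟨c, hc⟩ := hp; obtain ⟨d, hd⟩ := hq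
      refine ⟨c + d, ?_⟩
      have := Ideal.add_mem _ hc hd
      convert this using 1
      rw [map_add, map_add]
      ring
    | mul_X p i hp =>
      refine ⟨0, ?_⟩
      rw [map_mul, aeval_X, map_zero, sub_zero]
      exact Ideal.mul_mem_left _ _ (hesymm (i+1) (by omega))
  obtain ⟨q, hq⟩ := esymmAlgHom_surjective (σ := σ) (R := ℂ) (n := Fintype.card σ)
    le_rfl ⟨p, hp⟩
  have hq' : aeval (fun i : Fin (Fintype.card σ) => esymm σ ℂ (i + 1)) q = p := by
    have := congrArg Subtype.val hq
    rwa [esymmAlgHom_apply] at this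
  obtain ⟨c, hc⟩ := key q
  rw [hq'] at hc
  have hIker : ∀ x ∈ I, constantCoeff x = 0 := by
    intro x hx
    have hle : I ≤ RingHom.ker (constantCoeff : MvPolynomial σ ℂ →+* ℂ) := by
      rw [hI, Ideal.span_le]
      rintro _ ⟨i, rfl⟩
      simp only [SetLike.mem_coe, RingHom.mem_ker, psum, map_sum, map_pow,
        constantCoeff_X]
      exact Finset.sum_eq_zero fun ℓ _ => zero_pow (by omega)
    exact hle hx
  have hc0 : c = 0 := by
    have := hIker _ hc
    rw [map_sub, h0, constantCoeff_C, zero_sub, neg_eq_zero] at this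
    exact this
  rw [hc0, map_zero, sub_zero] at hc
  exact hc

lemma step_aux (n : ℕ) : ∀ (jv : ℕ) (j : Fin n), j.1 = jv → ∀ k, jv + 1 ≤ k →
    rename (Subtype.val : {i : Fin n // j ≤ i} → Fin n) (hsymm {i : Fin n // j ≤ i} ℂ k)
      ∈ Ideal.span (Set.range fun i : ℕ => psum (Fin n) ℂ (i+1)) := by
  intro jv
  induction jv with
  | zero =>
    intro j hj k hk
    have hall : ∀ i : Fin n, j ≤ i := fun i => by
      rw [Fin.le_def, hj]; exact Nat.zero_le _
    let e : {i : Fin n // j ≤ i} ≃ Fin n :=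
      ⟨Subtype.val, fun i => ⟨i, hall i⟩, fun x => Subtype.ext rfl, fun x => rfl⟩
    have hval : (Subtype.val : {i : Fin n // j ≤ i} → Fin n) = ⇑e := rfl
    rw [hval, rename_hsymm]
    exact symmetric_mem_span _ (hsymm_isSymmetric _ _ _) (constantCoeff_hsymm _ hk)
  | succ jv ih =>
    intro j hj k hk
    have hjn : jv < n := lt_trans (by omega) (hj ▸ j.2)
    set j' : Fin n := ⟨jv, hjn⟩ with hj'
    set a : {i : Fin n // j' ≤ i} := ⟨j', le_rfl⟩ with ha
    let e : {x : {i : Fin n // j' ≤ i} // x ≠ a} ≃ {i : Fin n // j ≤ i} :=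
      { toFun := fun x => ⟨x.1.1, by
          have h1 : jv ≤ x.1.1.1 := x.1.2
          have h2 : x.1.1.1 ≠ jv := fun hc => x.2 (Subtype.ext (Fin.ext hc))
          show j.1 ≤ x.1.1.1
          omega⟩
        invFun := fun y => ⟨⟨y.1, by
            have hy : j.1 ≤ y.1.1 := y.2
            show jv ≤ y.1.1
            omega⟩, by
          intro hcon
          have hc' : y.1.1 = jv := congrArg (fun z => z.1.1) hcon
          have hy : j.1 ≤ y.1.1 := y.2
          omega⟩
        left_inv := fun x => Subtype.ext (Subtype.ext rfl)
        right_inv := fun y => Subtype.ext rfl }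
    obtain ⟨k', rfl⟩ : ∃ k', k = k' + 1 := ⟨k-1, by omega⟩
    have hrec := congrArg (rename (Subtype.val : {i : Fin n // j' ≤ i} → Fin n))
      (hsymm_succ a k')
    rw [map_add, map_mul, rename_rename, rename_X] at hrec
    have hh : rename ((Subtype.val : {i : Fin n // j' ≤ i} → Fin n) ∘ Subtype.val)
        (hsymm {x : {i : Fin n // j' ≤ i} // x ≠ a} ℂ (k'+1))
        = rename (Subtype.val : {i : Fin n // j ≤ i} → Fin n)
          (hsymm {i : Fin n // j ≤ i} ℂ (k'+1)) := by
      rw [← rename_hsymm _ ℂ (k'+1) e, rename_rename]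
      rfl
    rw [hh] at hrec
    rw [eq_sub_of_add_eq hrec.symm]
    exact Ideal.sub_mem _ (ih j' rfl (k'+1) (by omega))
      (Ideal.mul_mem_left _ _ (ih j' rfl k' (by omega)))

end HsubkAux

/-- `h_k(x_j^m, …, x_n^m)`: the complete homogeneous symmetric polynomial of degree `k` in the
variables `x_j, …, x_n` (here `j : Fin n` is 0-indexed) evaluated at `m`-th powers. -/
noncomputable def hsubk (n m : ℕ) (j : Fin n) (k : ℕ) : MvPolynomial (Fin n) ℂ :=
  aeval (fun ℓ : Fin n => (X ℓ : MvPolynomial (Fin n) ℂ) ^ m)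
    (rename (Subtype.val : {i : Fin n // j ≤ i} → Fin n) (hsymm {i : Fin n // j ≤ i} ℂ k))

/-- For `1 ≤ j ≤ n` and `k ≥ j` (1-indexed; here `j : Fin n` is 0-indexed, so the hypothesis
is `k ≥ j.1 + 1`), `h_k(x_j^m,…,x_n^m)` lies in the ideal generated by the power sums
`p_i = ∑_ℓ x_ℓ^{mi}`, `i ≥ 1`. -/
theorem hsubk_mem_power_sum_ideal (n m : ℕ) (hm : 1 ≤ m) (j : Fin n) (k : ℕ)
    (hk : j.1 + 1 ≤ k) :
    hsubk n m j k ∈ Ideal.span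
      (Set.range fun i : ℕ => ∑ ℓ : Fin n, (X ℓ : MvPolynomial (Fin n) ℂ) ^ (m * (i + 1))) := by

  have hmem := HsubkAux.step_aux n j.1 j rfl k hk
  set f : MvPolynomial (Fin n) ℂ →+* MvPolynomial (Fin n) ℂ :=
    (aeval (fun ℓ : Fin n => (X ℓ : MvPolynomial (Fin n) ℂ) ^ m)).toRingHom with hf
  have h2 : hsubk n m j k ∈ Ideal.map f
      (Ideal.span (Set.range fun i : ℕ => psum (Fin n) ℂ (i+1))) :=
    Ideal.mem_map_of_mem f hmem
  rw [Ideal.map_span] at h2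
  refine Ideal.span_mono ?_ h2
  rintro _ ⟨_, ⟨i, rfl⟩, rfl⟩
  refine ⟨i, ?_⟩
  simp only [hf, psum, AlgHom.toRingHom_eq_coe, RingHom.coe_coe, map_sum, map_pow, aeval_X,
    ← pow_mul]
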